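/- If a satisfying assignment b₁, …, bₙ of a 3-CNF formula φ is given, then setting xᵢ := 1 if bᵢ is true and xᵢ := 0 otherwise, and sⱼ := L₁ʲL₂ʲ + L₁ʲL₃ʲ + L₂ʲL₃ʲ − L₁ʲL₂ʲL₃ʲ for each clause j (with L_kʲ the real encoding of the k-th literal of clause j), yields nonnegative real values solving all n equations xᵢ² − xᵢ = 0 and all p clause equations L₁ʲ + L₂ʲ + L₃ʲ − sⱼ − 1 = 0. -/

import Mathlib

lemma aux01 {a b c : ℝ} (ha : a = 0 ∨ a = 1) (hb : b = 0 ∨ b = 1)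
    (hc : c = 0 ∨ c = 1) (h : a = 1 ∨ b = 1 ∨ c = 1) :
    0 ≤ a * b + a * c + b * c - a * b * c ∧
    a + b + c - (a * b + a * c + b * c - a * b * c) - 1 = 0 := by
  rcases ha with ha | ha <;> rcases hb with hb | hb <;> rcases hc with hc | hc <;>
    subst ha <;> subst hb <;> subst hc <;> norm_num at h <;> norm_num

/-- From a satisfying assignment of a 3-CNF formula, the canonical values for the
variables and slack variables solve all equations of the reduced system. -/
theorem satisfying_assignment_solves_system (n p : ℕ)
    (φ : Fin p → Fin 3 → Fin n × Bool) (b : Fin n → Bool)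
    (hsat : ∀ j : Fin p, ∃ k : Fin 3,
      (if (φ j k).2 then b (φ j k).1 else !(b (φ j k).1)) = true)
    (x : Fin n → ℝ) (hxdef : ∀ i, x i = if b i then 1 else 0)
    (L : Fin p → Fin 3 → ℝ)
    (hL : ∀ j k, L j k = if (φ j k).2 then x (φ j k).1 else 1 - x (φ j k).1)
    (s : Fin p → ℝ)
    (hsdef : ∀ j, s j = L j 0 * L j 1 + L j 0 * L j 2 + L j 1 * L j 2
                        - L j 0 * L j 1 * L j 2) :
    (∀ i, 0 ≤ x i) ∧ (∀ j, 0 ≤ s j) ∧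
    (∀ i, x i ^ 2 - x i = 0) ∧
    (∀ j, L j 0 + L j 1 + L j 2 - s j - 1 = 0) := by
  have hx01 : ∀ i, x i = 0 ∨ x i = 1 := by
    intro i; rw [hxdef i]; by_cases h : b i <;> simp [h]
  have hL01 : ∀ j k, L j k = 0 ∨ L j k = 1 := by
    intro j k; rw [hL j k]
    rcases hx01 (φ j k).1 with h | h <;> by_cases hb : (φ j k).2 <;> simp [h, hb]
  have hL1 : ∀ j k, (if (φ j k).2 then b (φ j k).1 else !(b (φ j k).1)) = true →
      L j k = 1 := by
    intro j k h
    rw [hL j k, hxdef (φ j k).1]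
    by_cases hb : (φ j k).2 <;> simp [hb] at h ⊢ <;> simp [h]
  have key : ∀ j, 0 ≤ s j ∧ L j 0 + L j 1 + L j 2 - s j - 1 = 0 := by
    intro j
    obtain ⟨k, hk⟩ := hsat j
    have hone : L j 0 = 1 ∨ L j 1 = 1 ∨ L j 2 = 1 := by
      fin_cases k <;> [exact Or.inl (hL1 j 0 hk);
        exact Or.inr (Or.inl (hL1 j 1 hk)); exact Or.inr (Or.inr (hL1 j 2 hk))]
    have := aux01 (hL01 j 0) (hL01 j 1) (hL01 j 2) hone
    rw [hsdef j]
    exact this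
  refine ⟨fun i => ?_, fun j => (key j).1, fun i => ?_, fun j => (key j).2⟩
  · rw [hxdef i]; positivity
  · rcases hx01 i with h | h <;> rw [h] <;> ring
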